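/- Let D ≥ 1 and let G : (Fin D → ℝ) → Matrix (Fin D) (Fin D) ℝ be continuously differentiable with G p symmetric and invertible for every p. Define the Christoffel symbols Γ : (Fin D → ℝ) → Fin D → Fin D → Fin D → ℝ by Γ p A B C = (1/2) * Σ_E ((G p)⁻¹) A E * (∂_B (fun q => G q E C) p + ∂_C (fun q => G q E B) p - ∂_E (fun q => G q B C) p), where ∂_B denotes the partial derivative in the B-th coordinate direction of Fin D → ℝ. Let η : Matrix (Fin 3) (Fin 3) ℝ be the Minkowski matrix diagonal ![-1, 1, 1] (so η⁻¹ = η), and let u : (Fin 3 → ℝ) → (Fin D → ℝ) be twice continuously differentiable. Define T : (Fin 3 → ℝ) → Matrix (Fin 3) (Fin 3) ℝ by T x α β = Σ_{A,B} G (u x) A B * ∂_α u^A x * ∂_β u^B x - (1/2) * η α β * Σ_{λ,μ,A,B} η λ μ * G (u x) A B * ∂_λ u^A x * ∂_μ u^B x, and the wave-map operator W x A = Σ_{λ,μ} η λ μ * (∂_λ (∂_μ u^A) x + Σ_{B,C} Γ (u x) A B C * ∂_λ u^B x * ∂_μ u^C x). Then at every x: Σ_α ∂_α (fun y => Σ_{λ,μ}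 η α λ * η β μ * T y λ μ) x = Σ_{A,B,γ} G (u x) A B * W x A * η β γ * ∂_γ u^B x, for every β. -/

import Mathlib

attribute [local instance] Matrix.normedAddCommGroup Matrix.normedSpace

/-- Partial derivative in the `B`-th coordinate direction of `Fin n → ℝ`. -/
noncomputable def pd {n : ℕ} (B : Fin n) (f : (Fin n → ℝ) → ℝ) (p : Fin n → ℝ) : ℝ :=
  fderiv ℝ f p (Pi.single B 1)

section helpers
variable {n : ℕ} {f g : (Fin n → ℝ) → ℝ} {p : Fin n → ℝ} {B : Fin n}

lemma pd_sub (hf : DifferentiableAt ℝ f p) (hg : DifferentiableAt ℝ g p) :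
    pd B (fun q => f q - g q) p = pd B f p - pd B g p := by
  simp [pd, fderiv_fun_sub hf hg]

lemma pd_mul (hf : DifferentiableAt ℝ f p) (hg : DifferentiableAt ℝ g p) :
    pd B (fun q => f q * g q) p = pd B f p * g p + f p * pd B g p := by
  simp [pd, fderiv_fun_mul hf hg]; ring

lemma pd_const_mul (hf : DifferentiableAt ℝ f p) (c : ℝ) :
    pd B (fun q => c * f q) p = c * pd B f p := by
  simp [pd, fderiv_const_mul hf c]

lemma pd_sum {ι : Type*} (s : Finset ι) (F : ι → (Fin n → ℝ) → ℝ)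
    (hf : ∀ i ∈ s, DifferentiableAt ℝ (F i) p) :
    pd B (fun q => ∑ i ∈ s, F i q) p = ∑ i ∈ s, pd B (F i) p := by
  simp [pd, fderiv_fun_sum hf]

lemma contDiff_pd {m : ℕ} (hf : ContDiff ℝ (m+1 : ℕ) f) : ContDiff ℝ (m : ℕ) (pd B f) := by
  have h1 : ContDiff ℝ (m : ℕ) (fderiv ℝ f) := hf.fderiv_right (by norm_num)
  exact (ContinuousLinearMap.apply ℝ ℝ (Pi.single B 1)).contDiff.comp h1

lemma contDiff_pd_one (hf : ContDiff ℝ 2 f) : ContDiff ℝ 1 (pd B f) := by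
  have := contDiff_pd (m := 1) (B := B) (f := f) (by exact_mod_cast hf)
  exact_mod_cast this

lemma differentiableAt_pd (hf : ContDiff ℝ 2 f) : DifferentiableAt ℝ (pd B f) p :=
  ((contDiff_pd_one hf).differentiable one_ne_zero).differentiableAt

lemma pd_triple (F₁ F₂ F₃ : (Fin n → ℝ) → ℝ) (h1 : DifferentiableAt ℝ F₁ p)
    (h2 : DifferentiableAt ℝ F₂ p) (h3 : DifferentiableAt ℝ F₃ p) :
    pd B (fun q => F₁ q * F₂ q * F₃ q) p
      = pd B F₁ p * F₂ p * F₃ p + F₁ p * pd B F₂ p * F₃ p + F₁ p * F₂ p * pd B F₃ p := by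
  rw [pd_mul (f := fun q => F₁ q * F₂ q) (h1.mul h2) h3, pd_mul h1 h2]; ring

lemma pd_comp {D : ℕ} (f : (Fin D → ℝ) → ℝ) (u : (Fin n → ℝ) → (Fin D → ℝ))
    (x : Fin n → ℝ) (hf : DifferentiableAt ℝ f (u x)) (hu : DifferentiableAt ℝ u x)
    (α : Fin n) :
    pd α (fun y => f (u y)) x = ∑ C : Fin D, pd C f (u x) * pd α (fun y => u y C) x := by
  have hcomp : fderiv ℝ (fun y => f (u y)) x = (fderiv ℝ f (u x)).comp (fderiv ℝ u x) :=
    fderiv_comp x hf hu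
  have hproj : ∀ C : Fin D, pd α (fun y => u y C) x = fderiv ℝ u x (Pi.single α 1) C := by
    intro C
    have h : HasFDerivAt (fun y => u y C)
        ((ContinuousLinearMap.proj C : (Fin D → ℝ) →L[ℝ] ℝ).comp (fderiv ℝ u x)) x := by
      exact (ContinuousLinearMap.proj C : (Fin D → ℝ) →L[ℝ] ℝ).hasFDerivAt.comp x
        hu.hasFDerivAt
    simp [pd, h.fderiv]
  have hw : fderiv ℝ u x (Pi.single α 1) =
      ∑ C : Fin D, fderiv ℝ u x (Pi.single α 1) C • (Pi.single C (1:ℝ) : Fin D → ℝ) := by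
    ext j; simp [Pi.single_apply]
  have hfw : fderiv ℝ f (u x) (fderiv ℝ u x (Pi.single α 1)) =
      ∑ C : Fin D, fderiv ℝ u x (Pi.single α 1) C * pd C f (u x) := by
    conv_lhs => rw [hw]
    rw [map_sum]
    refine Finset.sum_congr rfl fun C _ => ?_
    rw [map_smul, smul_eq_mul]
    rfl
  calc pd α (fun y => f (u y)) x = fderiv ℝ f (u x) (fderiv ℝ u x (Pi.single α 1)) := by
        simp [pd, hcomp]
    _ = ∑ C : Fin D, fderiv ℝ u x (Pi.single α 1) C * pd C f (u x) := hfw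
    _ = _ := by
        refine Finset.sum_congr rfl fun C _ => ?_
        rw [← hproj C]; ring

lemma pd_pd_symm (hf : ContDiff ℝ 2 f) (α μ : Fin n) (x : Fin n → ℝ) :
    pd α (pd μ f) x = pd μ (pd α f) x := by
  have hsymm : IsSymmSndFDerivAt ℝ f x := hf.contDiffAt.isSymmSndFDerivAt (by norm_num)
  have hdf : DifferentiableAt ℝ (fderiv ℝ f) x :=
    ((hf.fderiv_right (m := 1) (by norm_num)).differentiable one_ne_zero).differentiableAt
  have key : ∀ c : Fin n → ℝ, ∀ w : Fin n → ℝ,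
      fderiv ℝ (fun y => fderiv ℝ f y c) x w = fderiv ℝ (fderiv ℝ f) x w c := by
    intro c w
    have h : HasFDerivAt (fun y => fderiv ℝ f y c)
        ((ContinuousLinearMap.apply ℝ ℝ c).comp (fderiv ℝ (fderiv ℝ f) x)) x :=
      (ContinuousLinearMap.apply ℝ ℝ c).hasFDerivAt.comp x hdf.hasFDerivAt
    simp [h.fderiv]
  show fderiv ℝ (fun y => fderiv ℝ f y (Pi.single μ 1)) x (Pi.single α 1) = _
  rw [key, hsymm]
  rw [← key]
  rfl
end helpers

section energy
variable {D : ℕ}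

/-- Derivative of one (coefficient times) energy-type term. -/
lemma pd_energy_c (G : (Fin D → ℝ) → Matrix (Fin D) (Fin D) ℝ) (hG : ContDiff ℝ 1 G)
    (u : (Fin 3 → ℝ) → (Fin D → ℝ)) (hu : ContDiff ℝ 2 u) (x : Fin 3 → ℝ)
    (c : ℝ) (α γ δ : Fin 3) :
    pd α (fun y => ∑ A, ∑ B,
        c * G (u y) A B * pd γ (fun z => u z A) y * pd δ (fun z => u z B) y) x
    = c * ∑ A, ∑ B,
        ((∑ C, pd C (fun q => G q A B) (u x) * pd α (fun y => u y C) x)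
            * pd γ (fun z => u z A) x * pd δ (fun z => u z B) x
          + G (u x) A B * pd α (fun y => pd γ (fun z => u z A) y) x
            * pd δ (fun z => u z B) x
          + G (u x) A B * pd γ (fun z => u z A) x
            * pd α (fun y => pd δ (fun z => u z B) y) x) := by
  have huA : ∀ A : Fin D, ContDiff ℝ 2 (fun y => u y A) := by
    intro A
    have h1 : ContDiff ℝ 2 ((ContinuousLinearMap.proj A : (Fin D → ℝ) →L[ℝ] ℝ) ∘ u) :=
      (ContinuousLinearMap.proj A).contDiff.comp hu
    exact h1
  have hGAB : ∀ A B : Fin D, ContDiff ℝ 1 (fun p => G p A B) := by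
    intro A B
    have h1 : ContDiff ℝ 1 ((ContinuousLinearMap.proj B : (Fin D → ℝ) →L[ℝ] ℝ) ∘
        (ContinuousLinearMap.proj A : (Matrix (Fin D) (Fin D) ℝ) →L[ℝ] (Fin D → ℝ)) ∘ G) :=
      (ContinuousLinearMap.proj B).contDiff.comp ((ContinuousLinearMap.proj A).contDiff.comp hG)
    exact h1
  have hGuAB : ∀ A B : Fin D, DifferentiableAt ℝ (fun y => G (u y) A B) x := by
    intro A B
    exact (((hGAB A B).comp (hu.of_le one_le_two)).differentiable one_ne_zero).differentiableAt
  have hvd : ∀ (μ : Fin 3) (A : Fin D),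
      DifferentiableAt ℝ (fun y => pd μ (fun z => u z A) y) x := by
    intro μ A
    exact differentiableAt_pd (huA A)
  have hterm : ∀ A B : Fin D, DifferentiableAt ℝ
      (fun y => c * G (u y) A B * pd γ (fun z => u z A) y * pd δ (fun z => u z B) y) x :=
    fun A B => (((hGuAB A B).const_mul c).mul (hvd γ A)).mul (hvd δ B)
  rw [pd_sum Finset.univ _ (fun A _ => DifferentiableAt.fun_sum fun B _ => hterm A B)]
  rw [Finset.mul_sum]
  refine Finset.sum_congr rfl fun A _ => ?_
  rw [pd_sum Finset.univ _ (fun B _ => hterm A B)]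
  rw [Finset.mul_sum]
  refine Finset.sum_congr rfl fun B _ => ?_
  rw [pd_triple _ _ _ ((hGuAB A B).const_mul c) (hvd γ A) (hvd δ B)]
  rw [pd_const_mul (hGuAB A B) c]
  rw [pd_comp (fun q => G q A B) u x
    (((hGAB A B).differentiable one_ne_zero).differentiableAt) (hu.differentiable two_ne_zero x) α]
  ring

/-- Same, without coefficient. -/
lemma pd_energy (G : (Fin D → ℝ) → Matrix (Fin D) (Fin D) ℝ) (hG : ContDiff ℝ 1 G)
    (u : (Fin 3 → ℝ) → (Fin D → ℝ)) (hu : ContDiff ℝ 2 u) (x : Fin 3 → ℝ)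
    (α γ δ : Fin 3) :
    pd α (fun y => ∑ A, ∑ B,
        G (u y) A B * pd γ (fun z => u z A) y * pd δ (fun z => u z B) y) x
    = ∑ A, ∑ B,
        ((∑ C, pd C (fun q => G q A B) (u x) * pd α (fun y => u y C) x)
            * pd γ (fun z => u z A) x * pd δ (fun z => u z B) x
          + G (u x) A B * pd α (fun y => pd γ (fun z => u z A) y) x
            * pd δ (fun z => u z B) x
          + G (u x) A B * pd γ (fun z => u z A) x
            * pd α (fun y => pd δ (fun z => u z B) y) x) := by
  have h := pd_energy_c G hG u hu x 1 α γ δ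
  simp only [one_mul] at h
  exact h
end energy

section rot
variable {ι κ σ τ : Type*} [Fintype ι] [Fintype κ] [Fintype σ] [Fintype τ]

lemma sum_rot3 (f : ι → κ → σ → ℝ) :
    ∑ a, ∑ b, ∑ c, f a b c = ∑ b, ∑ c, ∑ a, f a b c := by
  rw [Finset.sum_comm]
  exact Finset.sum_congr rfl fun b _ => Finset.sum_comm

lemma sum_rot3' (f : ι → κ → σ → ℝ) :
    ∑ a, ∑ b, ∑ c, f a b c = ∑ c, ∑ a, ∑ b, f a b c :=
  (sum_rot3 f).trans (sum_rot3 fun b c a => f a b c)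

lemma sum_push4 (f : ι → κ → σ → τ → ℝ) :
    ∑ a, ∑ b, ∑ c, ∑ e, f a b c e = ∑ b, ∑ c, ∑ e, ∑ a, f a b c e := by
  rw [Finset.sum_comm]
  refine Finset.sum_congr rfl fun b _ => ?_
  rw [Finset.sum_comm]
  exact Finset.sum_congr rfl fun c _ => Finset.sum_comm
end rot



lemma core {D : ℕ}
    (g : Fin D → Fin D → ℝ) (hg : ∀ A B, g A B = g B A)
    (d : Fin D → Fin D → Fin D → ℝ) (hd : ∀ C A B, d C A B = d C B A)
    (Γ : Fin D → Fin D → Fin D → ℝ)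
    (hΓ : ∀ P Q R : Fin D, (∑ A, g A P * Γ A Q R)
        = (1/2) * (d Q P R + d R P Q - d P Q R))
    (v : Fin 3 → Fin D → ℝ) (w : Fin 3 → Fin 3 → Fin D → ℝ)
    (hw : ∀ α μ A, w α μ A = w μ α A)
    (e : Fin 3 → ℝ) (he : ∀ γ, e γ * e γ = 1) (β : Fin 3) :
    ∑ α : Fin 3, e α *
      ((∑ A, ∑ B, ((∑ C, d C A B * v α C) * v α A * v β B
            + g A B * w α α A * v β B + g A B * v α A * w α β B))
        - (1/2) * (if α = β then e α else 0) *
          ∑ lam, ∑ mu, (if lam = mu then e lam else 0) *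
            (∑ A, ∑ B, ((∑ C, d C A B * v α C) * v lam A * v mu B
              + g A B * w α lam A * v mu B + g A B * v lam A * w α mu B)))
    = ∑ A, ∑ B, g A B *
        (∑ lam, e lam * (w lam lam A + ∑ P, ∑ Q, Γ A P Q * v lam P * v lam Q)) * v β B := by
  classical
  -- named pieces
  set TA : Fin 3 → ℝ := fun α => ∑ A, ∑ B, ∑ C, d C A B * v α C * v α A * v β B with hTA
  set TB : Fin 3 → ℝ := fun α => ∑ A, ∑ B, g A B * w α α A * v β B with hTB
  set TX : Fin 3 → ℝ := fun α => ∑ A, ∑ B, g A B * v α A * w α β B with hTX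
  set UA : Fin 3 → ℝ := fun lam => ∑ A, ∑ B, ∑ C, d C A B * v β C * v lam A * v lam B with hUA
  -- collapse of the Kronecker sums
  have collapse : ∀ P : Fin 3 → Fin 3 → ℝ,
      (∑ lam, ∑ mu, (if lam = mu then e lam else 0) * P lam mu) = ∑ lam, e lam * P lam lam := by
    intro P
    refine Finset.sum_congr rfl fun lam _ => ?_
    simp [ite_mul, zero_mul, Finset.sum_ite_eq]
  -- inner double-sum triple split
  have hTsplit : ∀ α lam mu : Fin 3,
      (∑ A, ∑ B, ((∑ C, d C A B * v α C) * v lam A * v mu B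
        + g A B * w α lam A * v mu B + g A B * v lam A * w α mu B))
      = (∑ A, ∑ B, ∑ C, d C A B * v α C * v lam A * v mu B)
        + (∑ A, ∑ B, g A B * w α lam A * v mu B)
        + (∑ A, ∑ B, g A B * v lam A * w α mu B) := by
    intro α lam mu
    rw [← Finset.sum_add_distrib, ← Finset.sum_add_distrib]
    refine Finset.sum_congr rfl fun A _ => ?_
    rw [← Finset.sum_add_distrib, ← Finset.sum_add_distrib]
    refine Finset.sum_congr rfl fun B _ => ?_
    rw [Finset.sum_mul, Finset.sum_mul]
  -- symmetric-index identifications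
  have hU2 : ∀ lam, (∑ A, ∑ B, g A B * w β lam A * v lam B) = TX lam := by
    intro lam
    rw [hTX, Finset.sum_comm]
    refine Finset.sum_congr rfl fun A _ => Finset.sum_congr rfl fun B _ => ?_
    rw [hg B A, hw β lam B, hw lam β B]
    ring
  have hU3 : ∀ lam, (∑ A, ∑ B, g A B * v lam A * w β lam B) = TX lam := by
    intro lam
    refine Finset.sum_congr rfl fun A _ => Finset.sum_congr rfl fun B _ => ?_
    rw [hw β lam B]
  -- LHS reduction
  have hL : (∑ α : Fin 3, e α *
      ((∑ A, ∑ B, ((∑ C, d C A B * v α C) * v α A * v β B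
            + g A B * w α α A * v β B + g A B * v α A * w α β B))
        - (1/2) * (if α = β then e α else 0) *
          ∑ lam, ∑ mu, (if lam = mu then e lam else 0) *
            (∑ A, ∑ B, ((∑ C, d C A B * v α C) * v lam A * v mu B
              + g A B * w α lam A * v mu B + g A B * v lam A * w α mu B))))
      = (∑ α : Fin 3, e α * (TA α + TB α + TX α))
        - (1/2) * ∑ lam, e lam * (UA lam + TX lam + TX lam) := by
    have step1 : ∀ α : Fin 3,
        (∑ A, ∑ B, ((∑ C, d C A B * v α C) * v α A * v β B
            + g A B * w α α A * v β B + g A B * v α A * w α β B))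
        = TA α + TB α + TX α := by
      intro α; rw [hTsplit α α β]
    have step2 : ∀ α : Fin 3,
        (∑ lam, ∑ mu, (if lam = mu then e lam else 0) *
          (∑ A, ∑ B, ((∑ C, d C A B * v α C) * v lam A * v mu B
            + g A B * w α lam A * v mu B + g A B * v lam A * w α mu B)))
        = ∑ lam, e lam *
            ((∑ A, ∑ B, ∑ C, d C A B * v α C * v lam A * v lam B)
              + (∑ A, ∑ B, g A B * w α lam A * v lam B)
              + (∑ A, ∑ B, g A B * v lam A * w α lam B)) := by
      intro α
      rw [collapse]
      exact Finset.sum_congr rfl fun lam _ => by rw [hTsplit α lam lam]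
    calc _ = ∑ α : Fin 3, (e α * (TA α + TB α + TX α)
          - e α * ((1/2) * (if α = β then e α else 0) *
            ∑ lam, e lam *
              ((∑ A, ∑ B, ∑ C, d C A B * v α C * v lam A * v lam B)
                + (∑ A, ∑ B, g A B * w α lam A * v lam B)
                + (∑ A, ∑ B, g A B * v lam A * w α lam B)))) := by
          refine Finset.sum_congr rfl fun α _ => ?_
          rw [step1 α, step2 α]; ring
      _ = (∑ α : Fin 3, e α * (TA α + TB α + TX α))
          - ∑ α : Fin 3, e α * ((1/2) * (if α = β then e α else 0) *
            ∑ lam, e lam *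
              ((∑ A, ∑ B, ∑ C, d C A B * v α C * v lam A * v lam B)
                + (∑ A, ∑ B, g A B * w α lam A * v lam B)
                + (∑ A, ∑ B, g A B * v lam A * w α lam B))) :=
          Finset.sum_sub_distrib _ _
      _ = _ := by
          congr 1
          rw [Finset.sum_eq_single β]
          · rw [if_pos rfl]
            have h1 : ∀ lam : Fin 3,
                ((∑ A, ∑ B, ∑ C, d C A B * v β C * v lam A * v lam B)
                  + (∑ A, ∑ B, g A B * w β lam A * v lam B)
                  + (∑ A, ∑ B, g A B * v lam A * w β lam B))
                = UA lam + TX lam + TX lam := by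
              intro lam
              rw [hU2 lam, hU3 lam, hUA]
            rw [show (∑ lam, e lam *
                ((∑ A, ∑ B, ∑ C, d C A B * v β C * v lam A * v lam B)
                  + (∑ A, ∑ B, g A B * w β lam A * v lam B)
                  + (∑ A, ∑ B, g A B * v lam A * w β lam B)))
              = ∑ lam, e lam * (UA lam + TX lam + TX lam) from
                Finset.sum_congr rfl fun lam _ => by rw [h1 lam]]
            linear_combination
              ((1/2) * ∑ lam, e lam * (UA lam + TX lam + TX lam)) * he β
          · intro b _ hb
            rw [if_neg hb]; ring
          · simp
  rw [hL]
  -- RHS reduction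
  have hR : (∑ A, ∑ B, g A B *
        (∑ lam, e lam * (w lam lam A + ∑ P, ∑ Q, Γ A P Q * v lam P * v lam Q)) * v β B)
      = ∑ lam : Fin 3, e lam * (TB lam + (TA lam - (1/2) * UA lam)) := by
    calc (∑ A, ∑ B, g A B *
          (∑ lam, e lam * (w lam lam A + ∑ P, ∑ Q, Γ A P Q * v lam P * v lam Q)) * v β B)
        = ∑ A, ∑ B, ∑ lam : Fin 3,
            g A B * (e lam * (w lam lam A + ∑ P, ∑ Q, Γ A P Q * v lam P * v lam Q)) * v β B := by
          refine Finset.sum_congr rfl fun A _ => Finset.sum_congr rfl fun B _ => ?_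
          rw [Finset.mul_sum, Finset.sum_mul]
      _ = ∑ lam : Fin 3, ∑ A, ∑ B,
            g A B * (e lam * (w lam lam A + ∑ P, ∑ Q, Γ A P Q * v lam P * v lam Q)) * v β B :=
          sum_rot3' _
      _ = ∑ lam : Fin 3, e lam * (TB lam
            + ∑ A, ∑ B, ∑ P, ∑ Q, g A B * Γ A P Q * v lam P * v lam Q * v β B) := by
          refine Finset.sum_congr rfl fun lam _ => ?_
          have inner : ∀ A B : Fin D,
              g A B * (∑ P, ∑ Q, Γ A P Q * v lam P * v lam Q) * v β B
              = ∑ P, ∑ Q, g A B * Γ A P Q * v lam P * v lam Q * v β B := by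
            intro A B
            rw [Finset.mul_sum, Finset.sum_mul]
            refine Finset.sum_congr rfl fun P _ => ?_
            rw [Finset.mul_sum, Finset.sum_mul]
            exact Finset.sum_congr rfl fun Q _ => by ring
          have expand : ∀ A B : Fin D,
              g A B * (e lam * (w lam lam A + ∑ P, ∑ Q, Γ A P Q * v lam P * v lam Q)) * v β B
              = e lam * (g A B * w lam lam A * v β B)
                + e lam * ∑ P, ∑ Q, g A B * Γ A P Q * v lam P * v lam Q * v β B := by
            intro A B
            rw [← inner A B]; ring
          calc (∑ A, ∑ B, g A B *
                (e lam * (w lam lam A + ∑ P, ∑ Q, Γ A P Q * v lam P * v lam Q)) * v β B)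
              = ∑ A, ∑ B, (e lam * (g A B * w lam lam A * v β B)
                + e lam * ∑ P, ∑ Q, g A B * Γ A P Q * v lam P * v lam Q * v β B) :=
                Finset.sum_congr rfl fun A _ => Finset.sum_congr rfl fun B _ => expand A B
            _ = _ := by
                simp only [Finset.sum_add_distrib, ← Finset.mul_sum, hTB]
                ring
      _ = ∑ lam : Fin 3, e lam * (TB lam + (TA lam - (1/2) * UA lam)) := by
          refine Finset.sum_congr rfl fun lam _ => ?_
          congr 2
          -- the Christoffel contraction part
          rw [sum_push4 (f := fun A B P Q => g A B * Γ A P Q * v lam P * v lam Q * v β B)]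
          have hfac : ∀ B P Q : Fin D,
              (∑ A, g A B * Γ A P Q * v lam P * v lam Q * v β B)
              = (1/2) * (d P B Q + d Q B P - d B P Q) * v lam P * v lam Q * v β B := by
            intro B P Q
            rw [← Finset.sum_mul, ← Finset.sum_mul, ← Finset.sum_mul, hΓ B P Q]
          rw [Finset.sum_congr rfl fun B _ => Finset.sum_congr rfl fun P _ =>
            Finset.sum_congr rfl fun Q _ => hfac B P Q]
          have mul3 : ∀ (c : ℝ) (F : Fin D → Fin D → Fin D → ℝ),
              c * (∑ B, ∑ P, ∑ Q, F B P Q) = ∑ B, ∑ P, ∑ Q, c * F B P Q := by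
            intro c F
            rw [Finset.mul_sum]
            refine Finset.sum_congr rfl fun B _ => ?_
            rw [Finset.mul_sum]
            exact Finset.sum_congr rfl fun P _ => Finset.mul_sum _ _ _
          have split : (∑ B, ∑ P, ∑ Q,
              (1/2) * (d P B Q + d Q B P - d B P Q) * v lam P * v lam Q * v β B)
              = (1/2) * (∑ B, ∑ P, ∑ Q, d P B Q * v lam P * v lam Q * v β B)
                + (1/2) * (∑ B, ∑ P, ∑ Q, d Q B P * v lam P * v lam Q * v β B)
                - (1/2) * (∑ B, ∑ P, ∑ Q, d B P Q * v lam P * v lam Q * v β B) := by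
            rw [mul3 (1/2) (fun B P Q => d P B Q * v lam P * v lam Q * v β B),
              mul3 (1/2) (fun B P Q => d Q B P * v lam P * v lam Q * v β B),
              mul3 (1/2) (fun B P Q => d B P Q * v lam P * v lam Q * v β B),
              ← Finset.sum_add_distrib, ← Finset.sum_sub_distrib]
            refine Finset.sum_congr rfl fun B _ => ?_
            rw [← Finset.sum_add_distrib, ← Finset.sum_sub_distrib]
            refine Finset.sum_congr rfl fun P _ => ?_
            rw [← Finset.sum_add_distrib, ← Finset.sum_sub_distrib]
            refine Finset.sum_congr rfl fun Q _ => ?_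
            ring
          rw [split]
          have hI1 : (∑ B, ∑ P, ∑ Q, d P B Q * v lam P * v lam Q * v β B) = TA lam := by
            simp only [hTA]
            conv_rhs => rw [sum_rot3 (f := fun A B C => d C A B * v lam C * v lam A * v β B)]
            refine Finset.sum_congr rfl fun B _ => Finset.sum_congr rfl fun P _ =>
              Finset.sum_congr rfl fun Q _ => ?_
            rw [hd P B Q]
            try ring
          have hI2 : (∑ B, ∑ P, ∑ Q, d Q B P * v lam P * v lam Q * v β B) = TA lam := by
            simp only [hTA]
            conv_rhs => rw [Finset.sum_comm]
            refine Finset.sum_congr rfl fun B _ => Finset.sum_congr rfl fun P _ =>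
              Finset.sum_congr rfl fun Q _ => ?_
            rw [hd Q B P]
            try ring
          have hI3 : (∑ B, ∑ P, ∑ Q, d B P Q * v lam P * v lam Q * v β B) = UA lam := by
            simp only [hUA]
            conv_rhs => rw [sum_rot3' (f := fun A B C => d C A B * v β C * v lam A * v lam B)]
            refine Finset.sum_congr rfl fun B _ => Finset.sum_congr rfl fun P _ =>
              Finset.sum_congr rfl fun Q _ => ?_
            ring
          rw [hI1, hI2, hI3]; ring
  rw [hR]
  rw [Finset.mul_sum, ← Finset.sum_sub_distrib]
  exact Finset.sum_congr rfl fun α _ => by ring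

/-- Christoffel symbols of the target metric `G`. -/
noncomputable def Γchr {D : ℕ} (G : (Fin D → ℝ) → Matrix (Fin D) (Fin D) ℝ)
    (p : Fin D → ℝ) (A B C : Fin D) : ℝ :=
  (1/2) * ∑ E : Fin D, (G p)⁻¹ A E *
    (pd B (fun q => G q E C) p + pd C (fun q => G q E B) p - pd E (fun q => G q B C) p)

/-- The Minkowski matrix `diag(-1, 1, 1)` on 3-dimensional spacetime. -/
noncomputable def ηmink : Matrix (Fin 3) (Fin 3) ℝ := Matrix.diagonal ![-1, 1, 1]

/-- Stress-energy tensor `T_{αβ} = ∂_α u · ∂_β u − (1/2) η_{αβ} ∂_λ u · ∂^λ u` of a map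
`u` from 3-dimensional Minkowski space into `(ℝ^D, G)`. -/
noncomputable def stressEnergy {D : ℕ} (G : (Fin D → ℝ) → Matrix (Fin D) (Fin D) ℝ)
    (u : (Fin 3 → ℝ) → (Fin D → ℝ)) (x : Fin 3 → ℝ) : Matrix (Fin 3) (Fin 3) ℝ :=
  Matrix.of fun α β =>
    (∑ A : Fin D, ∑ B : Fin D,
        G (u x) A B * pd α (fun y => u y A) x * pd β (fun y => u y B) x)
    - (1/2) * ηmink α β *
      ∑ lam : Fin 3, ∑ mu : Fin 3, ∑ A : Fin D, ∑ B : Fin D,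
        ηmink lam mu * G (u x) A B * pd lam (fun y => u y A) x * pd mu (fun y => u y B) x

/-- Wave-map operator `W^A = η^{λμ}(∂_λ ∂_μ u^A + Γ^A_{BC} ∂_λ u^B ∂_μ u^C)`. -/
noncomputable def waveMapOp {D : ℕ} (G : (Fin D → ℝ) → Matrix (Fin D) (Fin D) ℝ)
    (u : (Fin 3 → ℝ) → (Fin D → ℝ)) (x : Fin 3 → ℝ) (A : Fin D) : ℝ :=
  ∑ lam : Fin 3, ∑ mu : Fin 3, ηmink lam mu *
    (pd lam (fun y => pd mu (fun z => u z A) y) x +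
      ∑ B : Fin D, ∑ C : Fin D,
        Γchr G (u x) A B C * pd lam (fun y => u y B) x * pd mu (fun y => u y C) x)

/-- Identity 5.1 for a flat Minkowski domain: the divergence of the stress-energy tensor of a
map `u : ℝ^{1,2} → (ℝ^D, G)` equals the `G`-scalar product of the wave-map operator applied to
`u` with `∂^β u`. -/
theorem stress_energy_divergence_eq_waveMapOp_inner
    (D : ℕ) (hD : 1 ≤ D)
    (G : (Fin D → ℝ) → Matrix (Fin D) (Fin D) ℝ)
    (hG : ContDiff ℝ 1 G)
    (hGsymm : ∀ p, (G p).IsSymm) (hGinv : ∀ p, IsUnit (G p))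
    (u : (Fin 3 → ℝ) → (Fin D → ℝ)) (hu : ContDiff ℝ 2 u)
    (x : Fin 3 → ℝ) (β : Fin 3) :
    ∑ α : Fin 3,
        pd α (fun y => ∑ lam : Fin 3, ∑ mu : Fin 3,
          ηmink α lam * ηmink β mu * stressEnergy G u y lam mu) x
      = ∑ A : Fin D, ∑ B : Fin D, ∑ γ : Fin 3,
          G (u x) A B * waveMapOp G u x A * ηmink β γ * pd γ (fun y => u y B) x := by
  classical
  have hη : ∀ i j : Fin 3, ηmink i j = if i = j then (![-1,1,1] : Fin 3 → ℝ) i else 0 := by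
    intro i j; rw [ηmink, Matrix.diagonal_apply]
  -- differentiability facts
  have huA : ∀ A : Fin D, ContDiff ℝ 2 (fun y => u y A) := by
    intro A
    have h1 : ContDiff ℝ 2 ((ContinuousLinearMap.proj A : (Fin D → ℝ) →L[ℝ] ℝ) ∘ u) :=
      (ContinuousLinearMap.proj A).contDiff.comp hu
    exact h1
  have hGAB : ∀ A B : Fin D, ContDiff ℝ 1 (fun p => G p A B) := by
    intro A B
    have h1 : ContDiff ℝ 1 ((ContinuousLinearMap.proj B : (Fin D → ℝ) →L[ℝ] ℝ) ∘
        (ContinuousLinearMap.proj A : (Matrix (Fin D) (Fin D) ℝ) →L[ℝ] (Fin D → ℝ)) ∘ G) :=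
      (ContinuousLinearMap.proj B).contDiff.comp
        ((ContinuousLinearMap.proj A).contDiff.comp hG)
    exact h1
  have hGuABd : ∀ A B : Fin D, DifferentiableAt ℝ (fun y => G (u y) A B) x :=
    fun A B => (((hGAB A B).comp (hu.of_le one_le_two)).differentiable one_ne_zero).differentiableAt
  have hvd : ∀ (μ : Fin 3) (A : Fin D),
      DifferentiableAt ℝ (fun y => pd μ (fun z => u z A) y) x :=
    fun μ A => differentiableAt_pd (huA A)
  have hT1d : ∀ γ δ : Fin 3, DifferentiableAt ℝ (fun y => ∑ A : Fin D, ∑ B : Fin D,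
      G (u y) A B * pd γ (fun z => u z A) y * pd δ (fun z => u z B) y) x :=
    fun γ δ => DifferentiableAt.fun_sum fun A _ => DifferentiableAt.fun_sum fun B _ =>
      ((hGuABd A B).mul (hvd γ A)).mul (hvd δ B)
  have hSd : DifferentiableAt ℝ (fun y => ∑ lam : Fin 3, ∑ mu : Fin 3, ∑ A : Fin D, ∑ B : Fin D,
      ηmink lam mu * G (u y) A B * pd lam (fun z => u z A) y * pd mu (fun z => u z B) y) x :=
    DifferentiableAt.fun_sum fun lam _ => DifferentiableAt.fun_sum fun mu _ =>
      DifferentiableAt.fun_sum fun A _ => DifferentiableAt.fun_sum fun B _ =>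
      (((hGuABd A B).const_mul (ηmink lam mu)).mul (hvd lam A)).mul (hvd mu B)
  have hTdiff : ∀ γ δ : Fin 3, DifferentiableAt ℝ (fun y => stressEnergy G u y γ δ) x := by
    intro γ δ
    simp only [stressEnergy, Matrix.of_apply]
    exact (hT1d γ δ).sub (hSd.const_mul ((1/2) * ηmink γ δ))
  -- collapse of the η-contractions in the statement of the divergence
  have hfun : ∀ α : Fin 3, (fun y => ∑ lam : Fin 3, ∑ mu : Fin 3,
        ηmink α lam * ηmink β mu * stressEnergy G u y lam mu)
      = (fun y => (![-1,1,1] : Fin 3 → ℝ) α * ((![-1,1,1] : Fin 3 → ℝ) β * stressEnergy G u y α β)) := by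
    intro α; funext y
    have step1 : ∑ lam : Fin 3, ∑ mu : Fin 3,
        ηmink α lam * ηmink β mu * stressEnergy G u y lam mu
        = ∑ mu : Fin 3, ηmink α α * ηmink β mu * stressEnergy G u y α mu := by
      refine Finset.sum_eq_single α (fun b _ hb => ?_) (fun h => absurd (Finset.mem_univ α) h)
      refine Finset.sum_eq_zero fun mu _ => ?_
      rw [hη α b, if_neg fun h => hb h.symm]; ring
    have step2 : ∑ mu : Fin 3, ηmink α α * ηmink β mu * stressEnergy G u y α mu
        = ηmink α α * ηmink β β * stressEnergy G u y α β := by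
      refine Finset.sum_eq_single β (fun b _ hb => ?_) (fun h => absurd (Finset.mem_univ β) h)
      rw [hη β b, if_neg fun h => hb h.symm]; ring
    rw [step1, step2, hη α α, hη β β, if_pos rfl, if_pos rfl]; ring
  -- derivative of the stress-energy tensor
  have hpdT : ∀ α : Fin 3, pd α (fun y => stressEnergy G u y α β) x
      = (∑ A, ∑ B, ((∑ C, pd C (fun q => G q A B) (u x) * pd α (fun y => u y C) x)
              * pd α (fun z => u z A) x * pd β (fun z => u z B) x
            + G (u x) A B * pd α (fun y => pd α (fun z => u z A) y) x
              * pd β (fun z => u z B) x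
            + G (u x) A B * pd α (fun z => u z A) x
              * pd α (fun y => pd β (fun z => u z B) y) x))
        - (1/2) * ηmink α β * ∑ lam, ∑ mu, ηmink lam mu *
            ∑ A, ∑ B, ((∑ C, pd C (fun q => G q A B) (u x) * pd α (fun y => u y C) x)
                  * pd lam (fun z => u z A) x * pd mu (fun z => u z B) x
                + G (u x) A B * pd α (fun y => pd lam (fun z => u z A) y) x
                  * pd mu (fun z => u z B) x
                + G (u x) A B * pd lam (fun z => u z A) x
                  * pd α (fun y => pd mu (fun z => u z B) y) x) := by
    intro α
    have hfe : (fun y => stressEnergy G u y α β) = (fun y =>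
        (∑ A : Fin D, ∑ B : Fin D,
          G (u y) A B * pd α (fun z => u z A) y * pd β (fun z => u z B) y)
        - (1/2) * ηmink α β * ∑ lam : Fin 3, ∑ mu : Fin 3, ∑ A : Fin D, ∑ B : Fin D,
            ηmink lam mu * G (u y) A B * pd lam (fun z => u z A) y * pd mu (fun z => u z B) y) := by
      funext y; simp only [stressEnergy, Matrix.of_apply]
    rw [hfe, pd_sub (hT1d α β) (hSd.const_mul ((1/2) * ηmink α β)),
      pd_const_mul hSd ((1/2) * ηmink α β), pd_energy G hG u hu x α α β]
    congr 2
    rw [pd_sum Finset.univ (fun lam y => ∑ mu : Fin 3, ∑ A : Fin D, ∑ B : Fin D,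
        ηmink lam mu * G (u y) A B * pd lam (fun z => u z A) y * pd mu (fun z => u z B) y)
      (fun lam _ => DifferentiableAt.fun_sum fun mu _ =>
      DifferentiableAt.fun_sum fun A _ => DifferentiableAt.fun_sum fun B _ =>
      (((hGuABd A B).const_mul (ηmink lam mu)).mul (hvd lam A)).mul (hvd mu B))]
    refine Finset.sum_congr rfl fun lam _ => ?_
    rw [pd_sum Finset.univ (fun mu y => ∑ A : Fin D, ∑ B : Fin D,
        ηmink lam mu * G (u y) A B * pd lam (fun z => u z A) y * pd mu (fun z => u z B) y)
      (fun mu _ =>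
      DifferentiableAt.fun_sum fun A _ => DifferentiableAt.fun_sum fun B _ =>
      (((hGuABd A B).const_mul (ηmink lam mu)).mul (hvd lam A)).mul (hvd mu B))]
    refine Finset.sum_congr rfl fun mu _ => ?_
    exact pd_energy_c G hG u hu x (ηmink lam mu) α lam mu
  -- the algebraic core identity
  have hg' : ∀ A B : Fin D, G (u x) A B = G (u x) B A :=
    fun A B => ((hGsymm (u x)).apply A B).symm
  have hd' : ∀ C A B : Fin D,
      pd C (fun q => G q A B) (u x) = pd C (fun q => G q B A) (u x) := by
    intro C A B
    congr 1
    funext q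
    exact ((hGsymm q).apply A B).symm
  have hw' : ∀ (a m : Fin 3) (A : Fin D),
      pd a (fun y => pd m (fun z => u z A) y) x = pd m (fun y => pd a (fun z => u z A) y) x :=
    fun a m A => pd_pd_symm (huA A) a m x
  have he' : ∀ γ : Fin 3, (![-1,1,1] : Fin 3 → ℝ) γ * (![-1,1,1] : Fin 3 → ℝ) γ = 1 := by
    intro γ; fin_cases γ <;> norm_num
  have hΓ' : ∀ P Q R : Fin D, (∑ A, G (u x) A P * Γchr G (u x) A Q R)
      = (1/2) * (pd Q (fun q => G q P R) (u x) + pd R (fun q => G q P Q) (u x)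
          - pd P (fun q => G q Q R) (u x)) := by
    intro P Q R
    have hGG : G (u x) * (G (u x))⁻¹ = 1 :=
      Matrix.mul_nonsing_inv _ ((Matrix.isUnit_iff_isUnit_det _).mp (hGinv (u x)))
    calc (∑ A, G (u x) A P * Γchr G (u x) A Q R)
        = ∑ A, ∑ E, (1/2) * (G (u x) A P * ((G (u x))⁻¹ A E *
            (pd Q (fun q => G q E R) (u x) + pd R (fun q => G q E Q) (u x)
              - pd E (fun q => G q Q R) (u x)))) := by
          refine Finset.sum_congr rfl fun A _ => ?_
          rw [Γchr, mul_left_comm, Finset.mul_sum, Finset.mul_sum]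
      _ = ∑ E, (1/2) * ((G (u x) * (G (u x))⁻¹) P E *
            (pd Q (fun q => G q E R) (u x) + pd R (fun q => G q E Q) (u x)
              - pd E (fun q => G q Q R) (u x))) := by
          rw [Finset.sum_comm]
          refine Finset.sum_congr rfl fun E _ => ?_
          rw [Matrix.mul_apply, Finset.sum_mul, Finset.mul_sum]
          refine Finset.sum_congr rfl fun A _ => ?_
          rw [hg' A P]; ring
      _ = _ := by
          rw [hGG]
          simp only [Matrix.one_apply, ite_mul, zero_mul, mul_ite, mul_zero]
          rw [Finset.sum_ite_eq Finset.univ P]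
          simp
  have hcore := core (fun A B => G (u x) A B) hg'
    (fun C A B => pd C (fun q => G q A B) (u x)) hd'
    (fun A P Q => Γchr G (u x) A P Q) hΓ'
    (fun γ A => pd γ (fun y => u y A) x)
    (fun a m A => pd a (fun y => pd m (fun z => u z A) y) x) hw'
    (fun γ => (![-1,1,1] : Fin 3 → ℝ) γ) he' β
  have hcore' : (∑ α : Fin 3, (![-1,1,1] : Fin 3 → ℝ) α *
          ((∑ A, ∑ B, ((∑ C, pd C (fun q => G q A B) (u x) * pd α (fun y => u y C) x)
                * pd α (fun z => u z A) x * pd β (fun z => u z B) x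
              + G (u x) A B * pd α (fun y => pd α (fun z => u z A) y) x
                * pd β (fun z => u z B) x
              + G (u x) A B * pd α (fun z => u z A) x
                * pd α (fun y => pd β (fun z => u z B) y) x))
            - (1/2) * (if α = β then (![-1,1,1] : Fin 3 → ℝ) α else 0) *
              ∑ lam, ∑ mu, (if lam = mu then (![-1,1,1] : Fin 3 → ℝ) lam else 0) *
                (∑ A, ∑ B, ((∑ C, pd C (fun q => G q A B) (u x) * pd α (fun y => u y C) x)
                      * pd lam (fun z => u z A) x * pd mu (fun z => u z B) x
                    + G (u x) A B * pd α (fun y => pd lam (fun z => u z A) y) x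
                      * pd mu (fun z => u z B) x
                    + G (u x) A B * pd lam (fun z => u z A) x
                      * pd α (fun y => pd mu (fun z => u z B) y) x))))
      = (∑ A, ∑ B, G (u x) A B *
          (∑ lam, (![-1,1,1] : Fin 3 → ℝ) lam *
            (pd lam (fun y => pd lam (fun z => u z A) y) x
              + ∑ P, ∑ Q, Γchr G (u x) A P Q * pd lam (fun y => u y P) x
                  * pd lam (fun y => u y Q) x)) * pd β (fun y => u y B) x) := hcore
  -- collapse of the wave-map operator
  have hWcol : ∀ A : Fin D, waveMapOp G u x A
      = ∑ lam, (![-1,1,1] : Fin 3 → ℝ) lam *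
          (pd lam (fun y => pd lam (fun z => u z A) y) x
            + ∑ P, ∑ Q, Γchr G (u x) A P Q * pd lam (fun y => u y P) x
                * pd lam (fun y => u y Q) x) := by
    intro A
    rw [waveMapOp]
    refine Finset.sum_congr rfl fun lam _ => ?_
    have : ∀ mu : Fin 3, ηmink lam mu = if lam = mu then (![-1,1,1] : Fin 3 → ℝ) lam else 0 := fun mu => hη lam mu
    simp only [this, ite_mul, zero_mul, Finset.sum_ite_eq, Finset.mem_univ, if_true]
  -- put everything together
  calc ∑ α : Fin 3, pd α (fun y => ∑ lam : Fin 3, ∑ mu : Fin 3,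
          ηmink α lam * ηmink β mu * stressEnergy G u y lam mu) x
      = ∑ α : Fin 3, (![-1,1,1] : Fin 3 → ℝ) α * ((![-1,1,1] : Fin 3 → ℝ) β * pd α (fun y => stressEnergy G u y α β) x) := by
        refine Finset.sum_congr rfl fun α _ => ?_
        rw [hfun α, pd_const_mul ((hTdiff α β).const_mul ((![-1,1,1] : Fin 3 → ℝ) β)) ((![-1,1,1] : Fin 3 → ℝ) α),
          pd_const_mul (hTdiff α β) ((![-1,1,1] : Fin 3 → ℝ) β)]
    _ = (![-1,1,1] : Fin 3 → ℝ) β * (∑ α : Fin 3, (![-1,1,1] : Fin 3 → ℝ) α *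
          ((∑ A, ∑ B, ((∑ C, pd C (fun q => G q A B) (u x) * pd α (fun y => u y C) x)
                * pd α (fun z => u z A) x * pd β (fun z => u z B) x
              + G (u x) A B * pd α (fun y => pd α (fun z => u z A) y) x
                * pd β (fun z => u z B) x
              + G (u x) A B * pd α (fun z => u z A) x
                * pd α (fun y => pd β (fun z => u z B) y) x))
            - (1/2) * (if α = β then (![-1,1,1] : Fin 3 → ℝ) α else 0) *
              ∑ lam, ∑ mu, (if lam = mu then (![-1,1,1] : Fin 3 → ℝ) lam else 0) *
                (∑ A, ∑ B, ((∑ C, pd C (fun q => G q A B) (u x) * pd α (fun y => u y C) x)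
                      * pd lam (fun z => u z A) x * pd mu (fun z => u z B) x
                    + G (u x) A B * pd α (fun y => pd lam (fun z => u z A) y) x
                      * pd mu (fun z => u z B) x
                    + G (u x) A B * pd lam (fun z => u z A) x
                      * pd α (fun y => pd mu (fun z => u z B) y) x)))) := by
        rw [Finset.mul_sum]
        refine Finset.sum_congr rfl fun α _ => ?_
        rw [hpdT α]
        simp only [hη]
        ring
    _ = (![-1,1,1] : Fin 3 → ℝ) β * (∑ A, ∑ B, G (u x) A B *
          (∑ lam, (![-1,1,1] : Fin 3 → ℝ) lam *
            (pd lam (fun y => pd lam (fun z => u z A) y) x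
              + ∑ P, ∑ Q, Γchr G (u x) A P Q * pd lam (fun y => u y P) x
                  * pd lam (fun y => u y Q) x)) * pd β (fun y => u y B) x) := congrArg _ hcore'
    _ = _ := by
        rw [Finset.mul_sum]
        refine Finset.sum_congr rfl fun A _ => ?_
        rw [Finset.mul_sum]
        refine Finset.sum_congr rfl fun B _ => ?_
        have hγ : (∑ γ : Fin 3, G (u x) A B * waveMapOp G u x A * ηmink β γ
              * pd γ (fun y => u y B) x)
            = G (u x) A B * waveMapOp G u x A * ηmink β β * pd β (fun y => u y B) x := by
          refine Finset.sum_eq_single β (fun b _ hb => ?_) (fun h => absurd (Finset.mem_univ β) h)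
          rw [hη β b, if_neg fun h => hb h.symm]; ring
        rw [hγ, hWcol A, hη β β, if_pos rfl]
        ring
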